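/- Let S ⊂ R^q be a polyhedral convex set, x_0 ∈ S, v ∈ N_S(x_0), and z_0 = x_0 + v. Let K = T_S(x_0) ∩ {v}^⊥ be the critical cone. Then the directional derivative of the Euclidean projector Π_S at z_0 equals the Euclidean projection onto K: dΠ_S(z_0)(h) = Π_K(h) for all h ∈ R^q. -/

import Mathlib

open Filter
open scoped RealInnerProductSpace

variable {E : Type*} [NormedAddCommGroup E] [InnerProductSpace ℝ E]

def InCone (G : Finset E) (w : E) : Prop :=
  ∃ f : E → ℝ, (∀ g, 0 ≤ f g) ∧ ∑ g ∈ G, f g • g = w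

lemma inCone_mono {G₁ G₂ : Finset E} (hsub : G₁ ⊆ G₂) {w : E} (hw : InCone G₁ w) :
    InCone G₂ w := by
  classical
  obtain ⟨f, hf, hsum⟩ := hw
  refine ⟨fun g => if g ∈ G₁ then f g else 0, ?_, ?_⟩
  · intro g; dsimp only; split <;> simp [hf]
  · rw [← hsum, ← Finset.sum_subset hsub (fun g _ hg => by simp [hg])]
    exact Finset.sum_congr rfl fun g hg => by simp [hg]

lemma inCone_mem {G : Finset E} {g : E} (hg : g ∈ G) : InCone G g := by
  classical
  refine ⟨fun x => if x = g then 1 else 0, ?_, ?_⟩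
  · intro x; dsimp only; split <;> norm_num
  · simp [ite_smul, Finset.sum_ite_eq', hg]

lemma inCone_add {G : Finset E} {w₁ w₂ : E} (h1 : InCone G w₁) (h2 : InCone G w₂) :
    InCone G (w₁ + w₂) := by
  obtain ⟨f₁, hf₁, hs₁⟩ := h1
  obtain ⟨f₂, hf₂, hs₂⟩ := h2
  exact ⟨f₁ + f₂, fun g => add_nonneg (hf₁ g) (hf₂ g), by
    simp [add_smul, Finset.sum_add_distrib, hs₁, hs₂]⟩

lemma inCone_smul {G : Finset E} {w : E} {c : ℝ} (hc : 0 ≤ c) (hw : InCone G w) :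
    InCone G (c • w) := by
  obtain ⟨f, hf, hs⟩ := hw
  exact ⟨fun g => c * f g, fun g => mul_nonneg hc (hf g), by
    simp [mul_smul, ← Finset.smul_sum, hs]⟩

lemma inCone_zero {G : Finset E} : InCone G 0 :=
  ⟨0, fun g => le_refl 0, by simp⟩

lemma inCone_sum {G : Finset E} {ι : Type*} (s : Finset ι) (v : ι → E)
    (h : ∀ i ∈ s, InCone G (v i)) : InCone G (∑ i ∈ s, v i) := by
  classical
  induction s using Finset.induction_on with
  | empty => simpa using (inCone_zero (G := G))
  | insert _ _ hx ih =>
    rw [Finset.sum_insert hx]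
    exact inCone_add (h _ (Finset.mem_insert_self _ _))
      (ih fun i hi => h i (Finset.mem_insert_of_mem hi))

lemma inner_nonpos_of_inCone {G : Finset E} {b w : E}
    (hG : ∀ g ∈ G, ⟪b, g⟫ ≤ 0) (hw : InCone G w) : ⟪b, w⟫ ≤ 0 := by
  obtain ⟨f, hf, hs⟩ := hw
  rw [← hs, inner_sum]
  apply Finset.sum_nonpos
  intro g hg
  rw [real_inner_smul_right]
  exact mul_nonpos_of_nonneg_of_nonpos (hf g) (hG g hg)

open Classical in
/-- the double-description step generator set -/
noncomputable def ddSet (a : E) (G : Finset E) : Finset E :=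
  G.filter (fun g => ⟪a, g⟫ ≤ 0) ∪
    (G ×ˢ G).image (fun gg =>
      if ⟪a, gg.1⟫ < 0 ∧ 0 < ⟪a, gg.2⟫
      then ⟪a, gg.2⟫ • gg.1 + (-⟪a, gg.1⟫) • gg.2 else 0)

lemma dd_direct (a : E) (G : Finset E) (w : E) (f : E → ℝ)
    (hf : ∀ g, 0 ≤ f g) (hsum : ∑ g ∈ G, f g • g = w)
    (hPE : ∀ g ∈ G, f g ≠ 0 → ⟪a, g⟫ ≤ 0) : InCone (ddSet a G) w := by
  classical
  have hsub0 : G.filter (fun g => ⟪a, g⟫ ≤ 0) ⊆ ddSet a G := by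
    unfold ddSet
    exact Finset.subset_union_left
  apply inCone_mono hsub0
  refine ⟨f, hf, ?_⟩
  rw [← hsum]
  apply Finset.sum_subset (Finset.filter_subset _ _)
  intro g hg hng
  rw [Finset.mem_filter] at hng
  have : f g = 0 := by
    by_contra hfg
    exact hng ⟨hg, hPE g hg hfg⟩
  simp [this]

lemma double_desc (a : E) (G : Finset E) :
    ∀ (n : ℕ) (w : E) (f : E → ℝ), (∀ g, 0 ≤ f g) → (∑ g ∈ G, f g • g = w) →
    ⟪a, w⟫ ≤ 0 →
    (G.filter (fun g => f g ≠ 0 ∧ ⟪a, g⟫ ≠ 0)).card ≤ n →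
    InCone (ddSet a G) w := by
  classical
  intro n
  induction n with
  | zero =>
    intro w f hf hsum ha hcard
    have hempty : G.filter (fun g => f g ≠ 0 ∧ ⟪a, g⟫ ≠ 0) = ∅ :=
      Finset.card_eq_zero.mp (Nat.le_zero.mp hcard)
    apply dd_direct a G w f hf hsum
    intro g hg hfg
    by_contra hpos
    have : g ∈ G.filter (fun g => f g ≠ 0 ∧ ⟪a, g⟫ ≠ 0) :=
      Finset.mem_filter.mpr ⟨hg, hfg, fun h0 => hpos (le_of_eq h0)⟩
    rw [hempty] at this
    exact absurd this (Finset.notMem_empty g)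
  | succ n ih =>
    intro w f hf hsum ha hcard
    by_cases hP : ∀ g ∈ G, f g ≠ 0 → ⟪a, g⟫ ≤ 0
    · exact dd_direct a G w f hf hsum hP
    · push_neg at hP
      obtain ⟨gp, hgpG, hfgp, hagp'⟩ := hP
      have hagp : 0 < ⟪a, gp⟫ := hagp'
      have hfgp' : 0 < f gp := lt_of_le_of_ne (hf gp) (Ne.symm hfgp)
      have hsum_inner : ∑ g ∈ G, f g * ⟪a, g⟫ ≤ 0 := by
        have : ⟪a, w⟫ = ∑ g ∈ G, f g * ⟪a, g⟫ := by
          rw [← hsum, inner_sum]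
          exact Finset.sum_congr rfl fun g _ => by rw [real_inner_smul_right]
        rw [this] at ha
        exact ha
      have hgpmem : f gp * ⟪a, gp⟫ + ∑ g ∈ G.erase gp, f g * ⟪a, g⟫
          = ∑ g ∈ G, f g * ⟪a, g⟫ := Finset.add_sum_erase G (fun g => f g * ⟪a, g⟫) hgpG
      have hneg : ∑ g ∈ G.erase gp, f g * ⟪a, g⟫ < 0 := by nlinarith
      obtain ⟨gm, hgmE, hgm⟩ : ∃ g ∈ G.erase gp, f g * ⟪a, g⟫ < 0 := by
        by_contra hcon
        push_neg at hcon
        have : (0:ℝ) ≤ ∑ g ∈ G.erase gp, f g * ⟪a, g⟫ :=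
          Finset.sum_nonneg hcon
        linarith
      have hgmG : gm ∈ G := Finset.mem_of_mem_erase hgmE
      have hne : gm ≠ gp := Finset.ne_of_mem_erase hgmE
      have hfm : 0 < f gm := by
        rcases lt_or_eq_of_le (hf gm) with h | h
        · exact h
        · exfalso
          rw [← h] at hgm
          simp at hgm
      have hagm : ⟪a, gm⟫ < 0 := by nlinarith
      set β : ℝ := ⟪a, gp⟫ with hβ
      set γ : ℝ := ⟪a, gm⟫ with hγ
      have hγne : γ ≠ 0 := ne_of_lt hagm
      have hβne : β ≠ 0 := ne_of_gt hagp
      set θ : ℝ := min (f gm / β) (f gp / (-γ)) with hθ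
      have hθ0 : 0 < θ := lt_min (div_pos hfm hagp) (div_pos hfgp' (by linarith))
      set hvec : E := β • gm + (-γ) • gp with hhvec
      have hmemdd : hvec ∈ ddSet a G := by
        apply Finset.mem_union_right
        apply Finset.mem_image.mpr
        refine ⟨(gm, gp), Finset.mem_product.mpr ⟨hgmG, hgpG⟩, ?_⟩
        simp only [hhvec]
        rw [if_pos ⟨hagm, hagp⟩]
      set f' : E → ℝ := fun g =>
        if g = gm then f gm - θ * β else if g = gp then f gp - θ * (-γ) else f g
        with hf'def
      have hf'm : f' gm = f gm - θ * β := by simp [hf'def]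
      have hf'p : f' gp = f gp - θ * (-γ) := by simp [hf'def, Ne.symm hne]
      have hf' : ∀ g, 0 ≤ f' g := by
        intro g
        by_cases h1 : g = gm
        · rw [h1, hf'm]
          have h2 : θ ≤ f gm / β := min_le_left _ _
          have : θ * β ≤ f gm := by
            rw [← div_mul_cancel₀ (f gm) hβne]
            exact mul_le_mul_of_nonneg_right h2 (le_of_lt hagp)
          linarith
        · by_cases h2 : g = gp
          · rw [h2, hf'p]
            have h3 : θ ≤ f gp / (-γ) := min_le_right _ _
            have : θ * (-γ) ≤ f gp := by
              rw [← div_mul_cancel₀ (f gp) (by simpa using hγne : (-γ) ≠ 0)]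
              exact mul_le_mul_of_nonneg_right h3 (by linarith)
            linarith
          · simp [hf'def, h1, h2, hf g]
      have hgpE : gp ∈ G.erase gm := Finset.mem_erase.mpr ⟨Ne.symm hne, hgpG⟩
      have hsplit : ∀ F : E → ℝ, ∑ g ∈ G, F g • g
          = F gm • gm + (F gp • gp + ∑ g ∈ (G.erase gm).erase gp, F g • g) := by
        intro F
        rw [← Finset.add_sum_erase _ _ hgmG, ← Finset.add_sum_erase _ _ hgpE]
      have htail : ∑ g ∈ (G.erase gm).erase gp, f' g • g
          = ∑ g ∈ (G.erase gm).erase gp, f g • g := by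
        apply Finset.sum_congr rfl
        intro g hg
        have h1 : g ≠ gp := Finset.ne_of_mem_erase hg
        have h2 : g ≠ gm := Finset.ne_of_mem_erase (Finset.mem_of_mem_erase hg)
        simp [hf'def, h1, h2]
      have hsum' : ∑ g ∈ G, f' g • g = w - θ • hvec := by
        rw [hsplit f', htail, hf'm, hf'p]
        have hold : f gm • gm + (f gp • gp + ∑ g ∈ (G.erase gm).erase gp, f g • g) = w := by
          rw [← hsplit f]
          exact hsum
        rw [hhvec, ← hold]
        module
      have hw' : ⟪a, w - θ • hvec⟫ ≤ 0 := by
        have hz : ⟪a, hvec⟫ = 0 := by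
          rw [hhvec, inner_add_right, real_inner_smul_right, real_inner_smul_right,
            ← hβ, ← hγ]
          ring
        rw [inner_sub_right, real_inner_smul_right, hz]
        simpa using ha
      have hvanish : f' gm = 0 ∨ f' gp = 0 := by
        rcases le_total (f gm / β) (f gp / (-γ)) with hm | hm
        · left
          rw [hf'm, hθ, min_eq_left hm]
          field_simp
          ring
        · right
          rw [hf'p, hθ, min_eq_right hm]
          field_simp
          ring
      have hsub : G.filter (fun g => f' g ≠ 0 ∧ ⟪a, g⟫ ≠ 0)
          ⊆ G.filter (fun g => f g ≠ 0 ∧ ⟪a, g⟫ ≠ 0) := by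
        intro g hg
        rw [Finset.mem_filter] at hg ⊢
        refine ⟨hg.1, ?_, hg.2.2⟩
        by_cases h1 : g = gm
        · rw [h1]
          exact ne_of_gt hfm
        · by_cases h2 : g = gp
          · rw [h2]
            exact hfgp
          · have : f' g = f g := by simp [hf'def, h1, h2]
            rw [← this]
            exact hg.2.1
      have hssub : G.filter (fun g => f' g ≠ 0 ∧ ⟪a, g⟫ ≠ 0)
          ⊂ G.filter (fun g => f g ≠ 0 ∧ ⟪a, g⟫ ≠ 0) := by
        rcases hvanish with h0 | h0
        · refine ⟨hsub, fun hsup => ?_⟩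
          have hmem1 : gm ∈ G.filter (fun g => f g ≠ 0 ∧ ⟪a, g⟫ ≠ 0) :=
            Finset.mem_filter.mpr ⟨hgmG, ne_of_gt hfm, hγne⟩
          have := hsup hmem1
          rw [Finset.mem_filter] at this
          exact this.2.1 h0
        · refine ⟨hsub, fun hsup => ?_⟩
          have hmem1 : gp ∈ G.filter (fun g => f g ≠ 0 ∧ ⟪a, g⟫ ≠ 0) :=
            Finset.mem_filter.mpr ⟨hgpG, hfgp, hβne⟩
          have := hsup hmem1
          rw [Finset.mem_filter] at this
          exact this.2.1 h0
      have hcard' : (G.filter (fun g => f' g ≠ 0 ∧ ⟪a, g⟫ ≠ 0)).card ≤ n := by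
        have := Finset.card_lt_card hssub
        omega
      have hrec := ih (w - θ • hvec) f' hf' hsum' hw' hcard'
      have hfin : w = (w - θ • hvec) + θ • hvec := by abel
      rw [hfin]
      exact inCone_add hrec (inCone_smul (le_of_lt hθ0) (inCone_mem hmemdd))

open Classical in
noncomputable def univGens (q : ℕ) : Finset (EuclideanSpace ℝ (Fin q)) :=
  (Finset.univ.image fun i => EuclideanSpace.single i (1:ℝ)) ∪
    (Finset.univ.image fun i => EuclideanSpace.single i (-1:ℝ))

lemma inCone_univ {q : ℕ} (w : EuclideanSpace ℝ (Fin q)) :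
    InCone (univGens q) w := by
  classical
  unfold univGens
  have hrep : ∑ i, w i • EuclideanSpace.single i (1:ℝ) = w := by
    have := (EuclideanSpace.basisFun (Fin q) ℝ).sum_repr w
    simpa [EuclideanSpace.basisFun_apply, EuclideanSpace.basisFun_repr] using this
  rw [← hrep]
  refine inCone_sum Finset.univ (fun i => w i • EuclideanSpace.single i (1:ℝ)) ?_
  intro i _
  rcases le_or_gt 0 (w i) with hwi | hwi
  · apply inCone_smul hwi
    apply inCone_mem
    apply Finset.mem_union_left
    exact Finset.mem_image.mpr ⟨i, Finset.mem_univ i, rfl⟩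
  · have hneg : EuclideanSpace.single i (-1:ℝ) = - EuclideanSpace.single i (1:ℝ) := by
      ext j
      simp [EuclideanSpace.single_apply, apply_ite]
    have : w i • EuclideanSpace.single i (1:ℝ)
        = (-(w i)) • EuclideanSpace.single i (-1:ℝ) := by
      rw [hneg, smul_neg, neg_smul, neg_neg]
    dsimp only
    rw [this]
    apply inCone_smul (by linarith)
    apply inCone_mem
    apply Finset.mem_union_right
    exact Finset.mem_image.mpr ⟨i, Finset.mem_univ i, rfl⟩

lemma ddSet_constraints {a : E} {G : Finset E} {V : Finset E}
    (hG : ∀ g ∈ G, ∀ b ∈ V, ⟪b, g⟫ ≤ 0) :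
    ∀ g' ∈ ddSet a G, ⟪a, g'⟫ ≤ 0 ∧ ∀ b ∈ V, ⟪b, g'⟫ ≤ 0 := by
  classical
  intro g' hg'
  unfold ddSet at hg'
  rcases Finset.mem_union.mp hg' with hmem | hmem
  · rw [Finset.mem_filter] at hmem
    exact ⟨hmem.2, hG g' hmem.1⟩
  · obtain ⟨⟨g₁, g₂⟩, hpair, heq⟩ := Finset.mem_image.mp hmem
    rw [Finset.mem_product] at hpair
    by_cases hcond : ⟪a, g₁⟫ < 0 ∧ 0 < ⟪a, g₂⟫
    · rw [if_pos hcond] at heq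
      subst heq
      constructor
      · rw [inner_add_right, real_inner_smul_right, real_inner_smul_right]
        ring_nf
        nlinarith [hcond.1, hcond.2]
      · intro b hb
        rw [inner_add_right, real_inner_smul_right, real_inner_smul_right]
        have h1 := hG g₁ hpair.1 b hb
        have h2 := hG g₂ hpair.2 b hb
        nlinarith [hcond.1, hcond.2]
    · rw [if_neg hcond] at heq
      subst heq
      simp

lemma exists_gen {q : ℕ} (V : Finset (EuclideanSpace ℝ (Fin q))) :
    ∃ G : Finset (EuclideanSpace ℝ (Fin q)),
      ∀ w, (∀ a ∈ V, ⟪a, w⟫ ≤ 0) ↔ InCone G w := by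
  classical
  induction V using Finset.induction_on with
  | empty =>
    refine ⟨univGens q, fun w => ?_⟩
    constructor
    · intro _
      exact inCone_univ w
    · intro _ a ha
      exact absurd ha (Finset.notMem_empty a)
  | @insert a V ha ih =>
    obtain ⟨G, hG⟩ := ih
    refine ⟨ddSet a G, fun w => ?_⟩
    have hGc : ∀ g ∈ G, ∀ b ∈ V, ⟪b, g⟫ ≤ 0 := by
      intro g hg b hb
      exact ((hG g).mpr (inCone_mem hg)) b hb
    constructor
    · intro hw
      have hw' : ∀ b ∈ V, ⟪b, w⟫ ≤ 0 := fun b hb => hw b (Finset.mem_insert_of_mem hb)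
      have haw : ⟪a, w⟫ ≤ 0 := hw a (Finset.mem_insert_self a V)
      obtain ⟨f, hf, hsum⟩ := (hG w).mp hw'
      exact double_desc a G (G.filter (fun g => f g ≠ 0 ∧ ⟪a, g⟫ ≠ 0)).card w f hf hsum haw le_rfl
    · intro hw b hb
      rcases Finset.mem_insert.mp hb with rfl | hb'
      · exact inner_nonpos_of_inCone (fun g hg => (ddSet_constraints hGc g hg).1) hw
      · exact inner_nonpos_of_inCone (fun g hg => (ddSet_constraints hGc g hg).2 b hb') hw

lemma vi_of_nearest {C : Set E} (hC : Convex ℝ C) {z u : E} (hu : u ∈ C)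
    (hmin : ∀ s ∈ C, ‖z - u‖ ≤ ‖z - s‖) : ∀ s ∈ C, ⟪z - u, s - u⟫ ≤ 0 := by
  intro s hs
  by_contra hpos
  push_neg at hpos
  have hsu : s - u ≠ 0 := by
    intro h0
    rw [h0, inner_zero_right] at hpos
    exact lt_irrefl 0 hpos
  have hn2 : (0:ℝ) < ‖s - u‖^2 := pow_pos (norm_pos_iff.mpr hsu) 2
  set d : ℝ := ⟪z - u, s - u⟫ with hd
  set θ : ℝ := min 1 (d / ‖s - u‖^2) with hθ
  have hθpos : 0 < θ := lt_min one_pos (div_pos hpos hn2)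
  have hθ1 : θ ≤ 1 := min_le_left _ _
  have hθd : θ * ‖s - u‖^2 ≤ d := by
    have := min_le_right 1 (d / ‖s - u‖^2)
    calc θ * ‖s - u‖^2 ≤ (d / ‖s - u‖^2) * ‖s - u‖^2 := by
          apply mul_le_mul_of_nonneg_right this (le_of_lt hn2)
      _ = d := by field_simp
  have hmem : u + θ • (s - u) ∈ C := by
    have := hC hu hs (by linarith : (0:ℝ) ≤ 1 - θ) (le_of_lt hθpos) (by ring)
    convert this using 1
    module
  have hle := hmin _ hmem
  have hz : z - (u + θ • (s - u)) = (z - u) - θ • (s - u) := by abel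
  have hsq : ‖z - (u + θ • (s - u))‖^2 = ‖z - u‖^2 - 2 * (θ * d) + θ^2 * ‖s - u‖^2 := by
    rw [hz, norm_sub_sq_real, real_inner_smul_right, norm_smul]
    simp only [Real.norm_eq_abs, mul_pow, abs_of_pos hθpos, sq_abs]
    rfl
  have hlt : ‖z - (u + θ • (s - u))‖^2 < ‖z - u‖^2 := by
    rw [hsq]
    have h1 : θ^2 * ‖s-u‖^2 = θ * (θ * ‖s-u‖^2) := by ring
    have h2 : θ * (θ * ‖s-u‖^2) ≤ θ * d := by
      apply mul_le_mul_of_nonneg_left hθd (le_of_lt hθpos)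
    nlinarith [mul_pos hθpos hpos]
  have := pow_le_pow_left₀ (norm_nonneg _) hle 2
  linarith

lemma eq_of_vi {C : Set E} {z u₁ u₂ : E} (h1 : u₁ ∈ C) (h2 : u₂ ∈ C)
    (v1 : ∀ s ∈ C, ⟪z - u₁, s - u₁⟫ ≤ 0) (v2 : ∀ s ∈ C, ⟪z - u₂, s - u₂⟫ ≤ 0) :
    u₁ = u₂ := by
  have a1 := v1 u₂ h2
  have a2 := v2 u₁ h1
  have key : ⟪u₂ - u₁, u₂ - u₁⟫ ≤ 0 := by
    have : ⟪(z - u₁) - (z - u₂), u₂ - u₁⟫ ≤ 0 := by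
      rw [inner_sub_left]
      have : ⟪z - u₂, u₂ - u₁⟫ = - ⟪z - u₂, u₁ - u₂⟫ := by
        rw [← inner_neg_right]
        congr 1
        abel
      linarith
    convert this using 2
    abel
  have h0 : u₂ - u₁ = 0 := by
    have hnn := real_inner_self_nonneg (x := u₂ - u₁)
    exact inner_self_eq_zero.mp (le_antisymm key hnn)
  exact (sub_eq_zero.mp h0).symm

/-- A polyhedral convex set: a finite intersection of closed halfspaces. -/
def IsPolyhedral {q : ℕ} (P : Set (EuclideanSpace ℝ (Fin q))) : Prop :=
  ∃ H : Finset (EuclideanSpace ℝ (Fin q) × ℝ), P = {x | ∀ p ∈ H, ⟪p.1, x⟫ ≤ p.2}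

/-- let `S` be a polyhedral convex set, `x₀ ∈ S`,
`v ∈ N_S(x₀)`, and `z₀ = x₀ + v`. Let `K = T_S(x₀) ∩ {v}^⊥` be the critical cone,
where `T_S(x₀) = {w : ∃ t > 0, x₀ + t w ∈ S}`. Then the directional derivative of
the Euclidean projector `Π_S` at `z₀` in any direction `h` equals `Π_K h`, the
Euclidean projection of `h` onto `K`. Both projections are characterized here as
nearest-point maps. -/
theorem dirDeriv_proj_eq_proj_criticalCone {q : ℕ}
    (S : Set (EuclideanSpace ℝ (Fin q))) (hSpoly : IsPolyhedral S)
    (x₀ : EuclideanSpace ℝ (Fin q)) (hx₀ : x₀ ∈ S)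
    (v : EuclideanSpace ℝ (Fin q)) (hv : ∀ s ∈ S, ⟪v, s - x₀⟫ ≤ 0)
    (K : Set (EuclideanSpace ℝ (Fin q)))
    (hK : K = {w | ∃ t : ℝ, 0 < t ∧ x₀ + t • w ∈ S} ∩ {w | ⟪w, v⟫ = 0})
    (projS : EuclideanSpace ℝ (Fin q) → EuclideanSpace ℝ (Fin q))
    (hprojS : ∀ z, projS z ∈ S ∧ ∀ s ∈ S, ‖z - projS z‖ ≤ ‖z - s‖)
    (projK : EuclideanSpace ℝ (Fin q) → EuclideanSpace ℝ (Fin q))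
    (hprojK : ∀ z, projK z ∈ K ∧ ∀ s ∈ K, ‖z - projK z‖ ≤ ‖z - s‖)
    (h : EuclideanSpace ℝ (Fin q)) :
    Tendsto (fun t : ℝ => t⁻¹ • (projS ((x₀ + v) + t • h) - projS (x₀ + v)))
      (nhdsWithin 0 (Set.Ioi 0)) (nhds (projK h)) := by
  classical
  obtain ⟨H, hH⟩ := hSpoly
  set T : Set (EuclideanSpace ℝ (Fin q)) := {w | ∃ t : ℝ, 0 < t ∧ x₀ + t • w ∈ S} with hTdef
  set V : Finset (EuclideanSpace ℝ (Fin q)) :=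
    (H.filter (fun p => p.2 ≤ ⟪p.1, x₀⟫)).image Prod.fst with hVdef
  have hx₀H : ∀ p ∈ H, ⟪p.1, x₀⟫ ≤ p.2 := by
    rw [hH] at hx₀
    exact hx₀
  -- L1 : tangent cone representation
  have hTrep : T = {w | ∀ a ∈ V, ⟪a, w⟫ ≤ 0} := by
    apply Set.eq_of_subset_of_subset
    · rintro w ⟨t, ht, hmem⟩ a haV
      obtain ⟨pa, hpa, rfl⟩ := Finset.mem_image.mp haV
      rw [Finset.mem_filter] at hpa
      rw [hH] at hmem
      have h1 := hmem pa hpa.1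
      rw [inner_add_right, real_inner_smul_right] at h1
      have h2 := hpa.2
      nlinarith
    · intro w hw
      set t₀ : ℝ := (insert (1:ℝ)
        ((H.filter (fun p => ⟪p.1, x₀⟫ < p.2 ∧ 0 < ⟪p.1, w⟫)).image
          (fun p => (p.2 - ⟪p.1, x₀⟫) / ⟪p.1, w⟫))).min'
        (Finset.insert_nonempty _ _) with ht₀def
    
      have hposall : ∀ x ∈ (insert (1:ℝ)
          ((H.filter (fun p => ⟪p.1, x₀⟫ < p.2 ∧ 0 < ⟪p.1, w⟫)).image
            (fun p => (p.2 - ⟪p.1, x₀⟫) / ⟪p.1, w⟫))), 0 < x := by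
        intro x hx
        rcases Finset.mem_insert.mp hx with rfl | hx'
        · exact one_pos
        · obtain ⟨pa, hpa, rfl⟩ := Finset.mem_image.mp hx'
          rw [Finset.mem_filter] at hpa
          exact div_pos (by linarith [hpa.2.1]) hpa.2.2
      have ht₀pos : 0 < t₀ := hposall _ (Finset.min'_mem _ _)
      refine ⟨t₀, ht₀pos, ?_⟩
      rw [hH]
      intro pa hpa
      rw [inner_add_right, real_inner_smul_right]
      by_cases hact : pa.2 ≤ ⟪pa.1, x₀⟫
      · have haV : pa.1 ∈ V := Finset.mem_image.mpr
          ⟨pa, Finset.mem_filter.mpr ⟨hpa, hact⟩, rfl⟩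
        have hwle := hw pa.1 haV
        have := hx₀H pa hpa
        nlinarith
      · push_neg at hact
        by_cases hpw : ⟪pa.1, w⟫ ≤ 0
        · have := hx₀H pa hpa
          nlinarith
        · push_neg at hpw
          have hmem' : (pa.2 - ⟪pa.1, x₀⟫) / ⟪pa.1, w⟫ ∈ (insert (1:ℝ)
              ((H.filter (fun p => ⟪p.1, x₀⟫ < p.2 ∧ 0 < ⟪p.1, w⟫)).image
                (fun p => (p.2 - ⟪p.1, x₀⟫) / ⟪p.1, w⟫))) :=
            Finset.mem_insert_of_mem (Finset.mem_image.mpr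
              ⟨pa, Finset.mem_filter.mpr ⟨hpa, hact, hpw⟩, rfl⟩)
          have hle : t₀ ≤ (pa.2 - ⟪pa.1, x₀⟫) / ⟪pa.1, w⟫ := Finset.min'_le _ _ hmem'
          have : t₀ * ⟪pa.1, w⟫ ≤ pa.2 - ⟪pa.1, x₀⟫ := by
            rw [← div_mul_cancel₀ (pa.2 - ⟪pa.1, x₀⟫) (ne_of_gt hpw)]
            exact mul_le_mul_of_nonneg_right hle (le_of_lt hpw)
          linarith
  obtain ⟨G, hG⟩ := exists_gen V
  have hSconv : Convex ℝ S := by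
    rw [hH]
    intro x hx y hy a b ha hb hab pa hpa
    have h1 := hx pa hpa
    have h2 := hy pa hpa
    rw [inner_add_right, real_inner_smul_right, real_inner_smul_right]
    have h3 : a * pa.2 + b * pa.2 = pa.2 := by rw [← add_mul, hab, one_mul]
    nlinarith [mul_le_mul_of_nonneg_left h1 ha, mul_le_mul_of_nonneg_left h2 hb]
  have hKrep : K = {w | ∀ a ∈ V, ⟪a, w⟫ ≤ 0} ∩ {w | ⟪w, v⟫ = 0} := by
    rw [hK, hTrep]
  have hKconv : Convex ℝ K := by
    rw [hKrep]
    intro x hx y hy a b ha hb hab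
    constructor
    · intro g hg
      have h1 := hx.1 g hg
      have h2 := hy.1 g hg
      rw [inner_add_right, real_inner_smul_right, real_inner_smul_right]
      nlinarith [mul_le_mul_of_nonneg_left h1 ha, mul_le_mul_of_nonneg_left h2 hb]
    · have h1 := hx.2
      have h2 := hy.2
      show ⟪a • x + b • y, v⟫ = 0
      rw [inner_add_left, real_inner_smul_left, real_inner_smul_left,
        h1, h2]
      ring
  set p : EuclideanSpace ℝ (Fin q) := projK h with hpdef
  have hpK : p ∈ K := (hprojK h).1
  have hviK : ∀ s ∈ K, ⟪h - p, s - p⟫ ≤ 0 :=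
    vi_of_nearest hKconv hpK (hprojK h).2
  have hpv : ⟪p, v⟫ = 0 := by
    rw [hK] at hpK
    exact hpK.2
  have hscale : ∀ lam : ℝ, 0 < lam → lam • p ∈ K := by
    intro lam hlam
    rw [hK] at hpK ⊢
    obtain ⟨⟨τ, hτ, hτm⟩, hp2⟩ := hpK
    constructor
    · refine ⟨τ / lam, div_pos hτ hlam, ?_⟩
      rw [smul_smul, div_mul_cancel₀ _ (ne_of_gt hlam)]
      exact hτm
    · rw [Set.mem_setOf_eq, real_inner_smul_left, hp2, mul_zero]
  set c : EuclideanSpace ℝ (Fin q) := h - p with hcdef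
  have hcp : ⟪c, p⟫ = 0 := by
    have h1 := hviK ((2:ℝ) • p) (hscale 2 two_pos)
    have h2 := hviK ((1/2:ℝ) • p) (hscale (1/2) (by norm_num))
    have e1 : (2:ℝ) • p - p = p := by module
    have e2 : (1/2:ℝ) • p - p = (-(1/2):ℝ) • p := by module
    rw [e1] at h1
    rw [e2, real_inner_smul_right] at h2
    linarith
  have hvT : ∀ w ∈ T, ⟪v, w⟫ ≤ 0 := by
    rintro w ⟨t, ht, hm⟩
    have := hv _ hm
    have e : x₀ + t • w - x₀ = t • w := by abel
    rw [e, real_inner_smul_right] at this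
    nlinarith
  have hcK : ∀ w ∈ T, ⟪w, v⟫ = 0 → ⟪c, w⟫ ≤ 0 := by
    intro w hw hwv
    have hwK : w ∈ K := by
      rw [hK]
      exact ⟨hw, hwv⟩
    have := hviK w hwK
    rw [inner_sub_right, hcp] at this
    linarith
  have hmemT_iff : ∀ w, w ∈ T ↔ InCone G w := by
    intro w
    rw [hTrep, Set.mem_setOf_eq]
    exact hG w
  have hGT : ∀ g ∈ G, g ∈ T := fun g hg => (hmemT_iff g).mpr (inCone_mem hg)
  set εs : Finset ℝ :=
    insert (1:ℝ) (G.image (fun g => if 0 < ⟪c, g⟫ then -⟪v, g⟫ / ⟪c, g⟫ else 1)) with hεsdef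
  set ε : ℝ := εs.min' (Finset.insert_nonempty _ _) with hεdef
  have hvneg : ∀ g ∈ G, 0 < ⟪c, g⟫ → ⟪v, g⟫ < 0 := by
    intro g hg hcg
    rcases lt_or_eq_of_le (hvT g (hGT g hg)) with hlt | heq
    · exact hlt
    · exfalso
      have : ⟪g, v⟫ = 0 := by rw [real_inner_comm]; exact heq
      have := hcK g (hGT g hg) this
      linarith
  have hεpos : 0 < ε := by
    apply (Finset.lt_min'_iff _ _).mpr
    intro x hx
    rcases Finset.mem_insert.mp hx with rfl | hx'
    · exact one_pos
    · obtain ⟨g, hg, rfl⟩ := Finset.mem_image.mp hx'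
      by_cases hcg : 0 < ⟪c, g⟫
      · rw [if_pos hcg]
        exact div_pos (by linarith [hvneg g hg hcg]) hcg
      · rw [if_neg hcg]
        exact one_pos
  have hεkey : ∀ w ∈ T, ∀ t : ℝ, 0 < t → t ≤ ε → ⟪v, w⟫ + t * ⟪c, w⟫ ≤ 0 := by
    intro w hw t ht htε
    obtain ⟨f, hf, hsum⟩ := (hmemT_iff w).mp hw
    have expand : ⟪v, w⟫ + t * ⟪c, w⟫ = ∑ g ∈ G, f g * (⟪v, g⟫ + t * ⟪c, g⟫) := by
      rw [← hsum, inner_sum, inner_sum, Finset.mul_sum, ← Finset.sum_add_distrib]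
      apply Finset.sum_congr rfl
      intro g _
      rw [real_inner_smul_right, real_inner_smul_right]
      ring
    rw [expand]
    apply Finset.sum_nonpos
    intro g hg
    apply mul_nonpos_of_nonneg_of_nonpos (hf g)
    by_cases hcg : 0 < ⟪c, g⟫
    · have hεle : ε ≤ -⟪v, g⟫ / ⟪c, g⟫ := by
        apply Finset.min'_le
        apply Finset.mem_insert_of_mem
        refine Finset.mem_image.mpr ⟨g, hg, ?_⟩
        rw [if_pos hcg]
      have : t * ⟪c, g⟫ ≤ -⟪v, g⟫ := by
        rw [← div_mul_cancel₀ (-⟪v, g⟫) (ne_of_gt hcg)]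
        exact mul_le_mul_of_nonneg_right (le_trans htε hεle) (le_of_lt hcg)
      linarith
    · push_neg at hcg
      have h1 := hvT g (hGT g hg)
      nlinarith
  -- projection of z₀ is x₀
  have hprojz₀ : projS (x₀ + v) = x₀ := by
    apply eq_of_vi (hprojS (x₀ + v)).1 hx₀
      (vi_of_nearest hSconv (hprojS (x₀ + v)).1 (hprojS (x₀ + v)).2)
    intro s hs
    have e : (x₀ + v) - x₀ = v := by abel
    rw [e]
    exact hv s hs
  have hpT : p ∈ T := by
    rw [hK] at hpK
    exact hpK.1
  obtain ⟨τ, hτ, hτm⟩ := hpT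
  set t₁ : ℝ := min ε τ with ht₁def
  have ht₁pos : 0 < t₁ := lt_min hεpos hτ
  have hpv' : ⟪v, p⟫ = 0 := by rw [real_inner_comm]; exact hpv
  have key : ∀ t : ℝ, 0 < t → t < t₁ → projS ((x₀ + v) + t • h) = x₀ + t • p := by
    intro t ht0 htlt
    have htε : t ≤ ε := le_of_lt (lt_of_lt_of_le htlt (min_le_left _ _))
    have htτ : t ≤ τ := le_of_lt (lt_of_lt_of_le htlt (min_le_right _ _))
    have hτne : τ ≠ 0 := ne_of_gt hτ
    have hmemS : x₀ + t • p ∈ S := by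
      have hcomb := hSconv hx₀ hτm (a := 1 - t/τ) (b := t/τ)
        (by
          have : t/τ ≤ 1 := (div_le_one hτ).mpr htτ
          linarith)
        (by positivity) (by ring)
      have e : (1 - t/τ) • x₀ + (t/τ) • (x₀ + τ • p) = x₀ + t • p := by
        rw [smul_add, smul_smul, div_mul_cancel₀ _ hτne]
        module
      rw [e] at hcomb
      exact hcomb
    have hviU : ∀ s ∈ S, ⟪((x₀ + v) + t • h) - (x₀ + t • p), s - (x₀ + t • p)⟫ ≤ 0 := by
      intro s hs
      have hwT : s - x₀ ∈ T := ⟨1, one_pos, by simpa using hs⟩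
      have hkey := hεkey _ hwT t ht0 htε
      have e1 : ((x₀ + v) + t • h) - (x₀ + t • p) = v + t • c := by
        rw [hcdef]
        module
      have e2 : s - (x₀ + t • p) = (s - x₀) - t • p := by abel
      rw [e1, e2]
      have expand : ⟪v + t • c, (s - x₀) - t • p⟫
          = (⟪v, s - x₀⟫ + t * ⟪c, s - x₀⟫) - t * (⟪v, p⟫ + t * ⟪c, p⟫) := by
        simp only [inner_add_left, inner_sub_right, real_inner_smul_left,
          real_inner_smul_right]
        ring
      rw [expand, hpv', hcp]
      simpa using hkey
    exact eq_of_vi (hprojS _).1 hmemS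
      (vi_of_nearest hSconv (hprojS _).1 (hprojS _).2) hviU
  have heq : ∀ t ∈ Set.Ioo (0:ℝ) t₁,
      t⁻¹ • (projS ((x₀ + v) + t • h) - projS (x₀ + v)) = p := by
    intro t ht
    rw [key t ht.1 ht.2, hprojz₀]
    have e : x₀ + t • p - x₀ = t • p := by abel
    rw [e, smul_smul, inv_mul_cancel₀ (ne_of_gt ht.1), one_smul]
  have hev : (fun _ : ℝ => p) =ᶠ[nhdsWithin 0 (Set.Ioi 0)]
      (fun t : ℝ => t⁻¹ • (projS ((x₀ + v) + t • h) - projS (x₀ + v))) := by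
    filter_upwards [Ioo_mem_nhdsGT_of_mem (Set.mem_Ico.mpr ⟨le_refl 0, ht₁pos⟩)] with t ht
    exact (heq t ht).symm
  exact Filter.Tendsto.congr' hev tendsto_const_nhds
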